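/- Let n ≥ 2d be positive integers with d ≥ 1, let β be a real number with β ≤ n/4 and β² ≥ 2dn, and let A ∈ 𝒜_{n,d} be β-delocalized with rank A = n−1. Then the number of distinct matrices Ā of full rank n that can be obtained from A by a simple switching is at least n(n − 3β)d²/2. -/

import Mathlib

open Matrix Finset

/-- `𝒜_{n,d}`: 0/1 matrices with exactly `d` ones in every row and column. -/
def IsRegAdj (n d : ℕ) (A : Matrix (Fin n) (Fin n) ℝ) : Prop :=
  (∀ i j, A i j = 0 ∨ A i j = 1) ∧
  (∀ i, {j : Fin n | A i j = 1}.ncard = d) ∧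
  (∀ j, {i : Fin n | A i j = 1}.ncard = d)

/-- A simple switching can be performed in `(i, j, k, l)`. -/
def CanSwitch {n : ℕ} (A : Matrix (Fin n) (Fin n) ℝ) (i j k l : Fin n) : Prop :=
  A i k = 1 ∧ A j l = 1 ∧ A i l = 0 ∧ A j k = 0

/-- The matrix obtained from `A` by the simple switching in `(i, j, k, l)`. -/
def switch {n : ℕ} (A : Matrix (Fin n) (Fin n) ℝ) (i j k l : Fin n) :
    Matrix (Fin n) (Fin n) ℝ :=
  Matrix.of fun s t =>
    if (s = i ∧ t = k) ∨ (s = j ∧ t = l) then 0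
    else if (s = i ∧ t = l) ∨ (s = j ∧ t = k) then 1
    else A s t

/-- `F_{i,j}(A)`: the span of the rows of `A` other than the `i`-th and the `j`-th,
together with `R_i + R_j`. -/
def rowSpanF {n : ℕ} (A : Matrix (Fin n) (Fin n) ℝ) (i j : Fin n) :
    Submodule ℝ (Fin n → ℝ) :=
  Submodule.span ℝ (insert (A i + A j) {r : Fin n → ℝ | ∃ s, s ≠ i ∧ s ≠ j ∧ r = A s})

/-- Orthogonal complement w.r.t. the standard inner product on `ℝⁿ`. -/
def perp {n : ℕ} (F : Submodule ℝ (Fin n → ℝ)) : Submodule ℝ (Fin n → ℝ) where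
  carrier := {x | ∀ v ∈ F, v ⬝ᵥ x = 0}
  zero_mem' := by intro v hv; simp
  add_mem' := by intro a b ha hb v hv; simp [dotProduct_add, ha v hv, hb v hv]
  smul_mem' := by intro c x hx v hv; simp [dotProduct_smul, hx v hv]

/-- `A` is `β`-delocalized: no level set of a nonzero null vector (of `A` or `Aᵀ`)
has more than `β` coordinates. -/
def Delocalized {n : ℕ} (β : ℝ) (A : Matrix (Fin n) (Fin n) ℝ) : Prop :=
  ∀ x : Fin n → ℝ, x ≠ 0 →
    (x ∈ LinearMap.ker A.mulVecLin ∨ x ∈ LinearMap.ker Aᵀ.mulVecLin) →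
    ∀ lam : ℝ, ({i : Fin n | x i = lam}.ncard : ℝ) ≤ β

lemma canswitch_ne {n : ℕ} {A : Matrix (Fin n) (Fin n) ℝ} {i j k l : Fin n}
    (h : CanSwitch A i j k l) : i ≠ j ∧ k ≠ l := by
  obtain ⟨h1, h2, h3, h4⟩ := h
  constructor
  · rintro rfl; rw [h1] at h4; norm_num at h4
  · rintro rfl; rw [h1] at h3; norm_num at h3

lemma switch_apply {n : ℕ} {A : Matrix (Fin n) (Fin n) ℝ} {i j k l : Fin n}
    (h : CanSwitch A i j k l) (s t : Fin n) :
    switch A i j k l s t = A s t +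
      ((if s = i then (1:ℝ) else 0) - if s = j then 1 else 0) *
      ((if t = l then (1:ℝ) else 0) - if t = k then 1 else 0) := by
  obtain ⟨hij, hkl⟩ := canswitch_ne h
  obtain ⟨h1, h2, h3, h4⟩ := h
  by_cases hsi : s = i <;> by_cases hsj : s = j <;>
    by_cases htk : t = k <;> by_cases htl : t = l <;>
    simp_all [switch] <;> ring

lemma switch_rank {n : ℕ} {A : Matrix (Fin n) (Fin n) ℝ} {i j k l : Fin n}
    (hcan : CanSwitch A i j k l) (x z : Fin n → ℝ)
    (hker : LinearMap.ker Aᵀ.mulVecLin = Submodule.span ℝ {x})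
    (hz : A.mulVec z = 0) (hxij : x i ≠ x j) (hzkl : z k ≠ z l) :
    (switch A i j k l).rank = n := by
  set B := switch A i j k l with hB
  set v : Fin n → ℝ := fun t => (if t = l then (1:ℝ) else 0) - if t = k then 1 else 0 with hv
  have key : ∀ y : Fin n → ℝ, Bᵀ.mulVec y = Aᵀ.mulVec y + (y i - y j) • v := by
    intro y; funext t
    simp only [Matrix.mulVec, dotProduct, Matrix.transpose_apply, Pi.add_apply,
      Pi.smul_apply, smul_eq_mul]
    have : ∀ s, B s t * y s = A s t * y s +
        (((if s = i then (1:ℝ) else 0) * (v t * y s)) - ((if s = j then 1 else 0) * (v t * y s))) := by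
      intro s; rw [hB, switch_apply hcan]; ring
    rw [Finset.sum_congr rfl fun s _ => this s, Finset.sum_add_distrib,
      Finset.sum_sub_distrib]
    simp [Finset.sum_ite_eq', mul_comm]
    ring
  have hkerB : LinearMap.ker Bᵀ.mulVecLin = ⊥ := by
    rw [Submodule.eq_bot_iff]
    intro y hy
    have hy' : Bᵀ.mulVec y = 0 := hy
    rw [key y] at hy'
    have hdot : (Aᵀ.mulVec y) ⬝ᵥ z = 0 := by
      rw [Matrix.mulVec_transpose, ← Matrix.dotProduct_mulVec, hz, dotProduct_zero]
    have hvz : v ⬝ᵥ z = z l - z k := by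
      simp [hv, dotProduct, sub_mul, Finset.sum_sub_distrib, Finset.sum_ite_eq']
    have h0 : (Aᵀ.mulVec y + (y i - y j) • v) ⬝ᵥ z = 0 := by rw [hy']; simp
    rw [add_dotProduct, hdot, smul_dotProduct, hvz] at h0
    have hyij : y i = y j := by
      have h0' : (y i - y j) * (z l - z k) = 0 := by
        have := h0; simpa [smul_eq_mul] using this
      rcases mul_eq_zero.mp h0' with h | h
      · exact sub_eq_zero.mp h
      · exact absurd (sub_eq_zero.mp h).symm hzkl
    have hyA : Aᵀ.mulVec y = 0 := by
      have : (y i - y j) • v = 0 := by rw [hyij]; simp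
      rwa [this, add_zero] at hy'
    have hymem : y ∈ LinearMap.ker Aᵀ.mulVecLin := by
      rw [LinearMap.mem_ker, Matrix.mulVecLin_apply]; exact hyA
    rw [hker, Submodule.mem_span_singleton] at hymem
    obtain ⟨c, rfl⟩ := hymem
    have : c * x i = c * x j := by simpa using hyij
    have hc : c = 0 := by
      by_contra hc
      exact hxij (mul_left_cancel₀ hc this)
    rw [hc]; simp
  have hrkT : Bᵀ.rank = n := by
    have h1 := LinearMap.finrank_range_add_finrank_ker (Bᵀ.mulVecLin)
    rw [hkerB, finrank_bot] at h1
    have h2 : Module.finrank ℝ (Fin n → ℝ) = n := by simp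
    rw [Matrix.rank]
    omega
  rw [← Matrix.rank_transpose]; exact hrkT

lemma switch_inj {n : ℕ} {A : Matrix (Fin n) (Fin n) ℝ} {i j k l i' j' k' l' : Fin n}
    (h : CanSwitch A i j k l) (h' : CanSwitch A i' j' k' l')
    (heq : switch A i j k l = switch A i' j' k' l') :
    (i = i' ∧ j = j' ∧ k = k' ∧ l = l') ∨ (i = j' ∧ j = i' ∧ k = l' ∧ l = k') := by
  obtain ⟨hij, hkl⟩ := canswitch_ne h
  obtain ⟨hij', hkl'⟩ := canswitch_ne h'
  obtain ⟨a1, a2, a3, a4⟩ := h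
  obtain ⟨b1, b2, b3, b4⟩ := h'
  have eik := congrFun (congrFun heq i) k
  have ejl := congrFun (congrFun heq j) l
  have eil := congrFun (congrFun heq i) l
  have ejk := congrFun (congrFun heq j) k
  -- LHS values
  have Lik : switch A i j k l i k = 0 := by simp [switch]
  have Ljl : switch A i j k l j l = 0 := by simp [switch, hij.symm, hkl.symm]
  have Lil : switch A i j k l i l = 1 := by simp [switch, hij, hkl.symm, hkl]
  have Ljk : switch A i j k l j k = 1 := by simp [switch, hij.symm, hkl]
  have c1 : (i = i' ∧ k = k') ∨ (i = j' ∧ k = l') := by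
    rw [Lik] at eik
    by_contra hc
    push_neg at hc
    simp only [switch, Matrix.of_apply] at eik
    split_ifs at eik with p q
    · tauto
    · norm_num at eik
    · rw [← eik] at a1; norm_num at a1
  have c2 : (j = i' ∧ l = k') ∨ (j = j' ∧ l = l') := by
    rw [Ljl] at ejl
    by_contra hc
    push_neg at hc
    simp only [switch, Matrix.of_apply] at ejl
    split_ifs at ejl with p q
    · tauto
    · norm_num at ejl
    · rw [← ejl] at a2; norm_num at a2
  have c3 : (i = i' ∧ l = l') ∨ (i = j' ∧ l = k') := by
    rw [Lil] at eil
    by_contra hc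
    push_neg at hc
    simp only [switch, Matrix.of_apply] at eil
    split_ifs at eil with p q
    · norm_num at eil
    · tauto
    · rw [← eil] at a3; norm_num at a3
  rcases c1 with ⟨hii, hkk⟩ | ⟨hij2, hkl2⟩
  · left
    have hll : l = l' := by
      rcases c3 with ⟨_, hll⟩ | ⟨hij3, _⟩
      · exact hll
      · exact absurd (hii ▸ hij3 : i' = j') hij'
    have hjj : j = j' := by
      rcases c2 with ⟨hji, hlk⟩ | ⟨hjj, _⟩
      · exact absurd (hll ▸ hlk : l' = k') (Ne.symm hkl')
      · exact hjj
    exact ⟨hii, hjj, hkk, hll⟩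
  · right
    have hlk : l = k' := by
      rcases c3 with ⟨hii3, _⟩ | ⟨_, hlk⟩
      · exact absurd (hij2 ▸ hii3 : j' = i') (Ne.symm hij')
      · exact hlk
    have hji : j = i' := by
      rcases c2 with ⟨hji, _⟩ | ⟨hjj, hll⟩
      · exact hji
      · exact absurd (hlk ▸ hll : k' = l') hkl'
    exact ⟨hij2, hji, hkl2, hlk⟩

lemma sum_mul_distrib {α β : Type*} [Fintype α] [Fintype β] (f : α → ℕ) (g : β → ℕ) :
    ∑ k : α, ∑ l : β, f k * g l = (∑ k, f k) * (∑ l, g l) :=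
  (Finset.sum_mul_sum univ univ f g).symm

lemma sum_swap3 {n : ℕ} (f : Fin n → Fin n → Fin n → ℕ) :
    ∑ j, ∑ k, ∑ l, f j k l = ∑ k, ∑ l, ∑ j, f j k l := by
  rw [Finset.sum_comm]; exact Finset.sum_congr rfl fun k _ => Finset.sum_comm

lemma card_G {n d : ℕ} {A : Matrix (Fin n) (Fin n) ℝ} (hA : IsRegAdj n d A)
    {β : ℝ} (x z : Fin n → ℝ)
    (hx : ∀ lam : ℝ, ({i : Fin n | x i = lam}.ncard : ℝ) ≤ β)
    (hz : ∀ lam : ℝ, ({i : Fin n | z i = lam}.ncard : ℝ) ≤ β)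
    (G : Finset (Fin n × Fin n × Fin n × Fin n))
    (hG : ∀ q : Fin n × Fin n × Fin n × Fin n,
      (CanSwitch A q.1 q.2.1 q.2.2.1 q.2.2.2 ∧ x q.1 ≠ x q.2.1 ∧ z q.2.2.1 ≠ z q.2.2.2) → q ∈ G) :
    (n:ℝ)^2 * d^2 - 2*n*d^3 - 2*β*n*d^2 ≤ (G.card : ℝ) := by
  classical
  set a : Fin n → Fin n → ℕ := fun i k => if A i k = 1 then 1 else 0 with ha
  have hfilt : ∀ (w : Fin n → ℝ) (lam : ℝ),
      ({i : Fin n | w i = lam}.ncard) = (univ.filter fun i => w i = lam).card := by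
    intro w lam
    rw [Set.ncard_eq_toFinset_card', Set.toFinset_setOf]
  have rowd : ∀ i, ∑ k, a i k = d := by
    intro i
    have h1 := hA.2.1 i
    rw [hfilt (fun j => A i j) 1] at h1
    rw [← h1, Finset.card_filter]
  have cold : ∀ k, ∑ i, a i k = d := by
    intro k
    have h1 := hA.2.2 k
    rw [hfilt (fun i => A i k) 1] at h1
    rw [← h1, Finset.card_filter]
  -- the five sets
  set P : Finset (Fin n × Fin n × Fin n × Fin n) :=
    univ.filter (fun q => A q.1 q.2.2.1 = 1 ∧ A q.2.1 q.2.2.2 = 1) with hPdef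
  set B1 : Finset (Fin n × Fin n × Fin n × Fin n) :=
    univ.filter (fun q => A q.1 q.2.2.1 = 1 ∧ A q.2.1 q.2.2.2 = 1 ∧ A q.1 q.2.2.2 = 1) with hB1def
  set B2 : Finset (Fin n × Fin n × Fin n × Fin n) :=
    univ.filter (fun q => A q.1 q.2.2.1 = 1 ∧ A q.2.1 q.2.2.2 = 1 ∧ A q.2.1 q.2.2.1 = 1) with hB2def
  set B3 : Finset (Fin n × Fin n × Fin n × Fin n) :=
    univ.filter (fun q => A q.1 q.2.2.1 = 1 ∧ A q.2.1 q.2.2.2 = 1 ∧ x q.2.1 = x q.1) with hB3def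
  set B4 : Finset (Fin n × Fin n × Fin n × Fin n) :=
    univ.filter (fun q => A q.1 q.2.2.1 = 1 ∧ A q.2.1 q.2.2.2 = 1 ∧ z q.2.2.2 = z q.2.2.1) with hB4def
  have hsub : P ⊆ (((G ∪ B1) ∪ B2) ∪ B3) ∪ B4 := by
    intro q hq
    rw [hPdef, Finset.mem_filter] at hq
    obtain ⟨-, h1, h2⟩ := hq
    simp only [Finset.mem_union, hB1def, hB2def, hB3def, hB4def, Finset.mem_filter,
      Finset.mem_univ, true_and]
    by_cases c4 : z q.2.2.2 = z q.2.2.1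
    · right; exact ⟨h1, h2, c4⟩
    left
    by_cases c3 : x q.2.1 = x q.1
    · right; exact ⟨h1, h2, c3⟩
    left
    by_cases c2 : A q.2.1 q.2.2.1 = 1
    · right; exact ⟨h1, h2, c2⟩
    left
    by_cases c1 : A q.1 q.2.2.2 = 1
    · right; exact ⟨h1, h2, c1⟩
    left
    refine hG q ⟨⟨h1, h2, ?_, ?_⟩, fun h => c3 h.symm, fun h => c4 h.symm⟩
    · rcases hA.1 q.1 q.2.2.2 with h | h
      · exact h
      · exact absurd h c1
    · rcases hA.1 q.2.1 q.2.2.1 with h | h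
      · exact h
      · exact absurd h c2
  have hcard : P.card ≤ G.card + B1.card + B2.card + B3.card + B4.card := by
    refine le_trans (Finset.card_le_card hsub) ?_
    refine le_trans (Finset.card_union_le _ _) ?_
    refine add_le_add ?_ le_rfl
    refine le_trans (Finset.card_union_le _ _) ?_
    refine add_le_add ?_ le_rfl
    refine le_trans (Finset.card_union_le _ _) ?_
    refine add_le_add ?_ le_rfl
    exact Finset.card_union_le _ _
  -- card P
  have hP : P.card = n^2 * (d^2) := by
    rw [hPdef, Finset.card_filter]
    simp only [Fintype.sum_prod_type]
    have split : ∀ i j k l : Fin n,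
        (if A i k = 1 ∧ A j l = 1 then (1:ℕ) else 0) = a i k * a j l := by
      intro i j k l
      by_cases h1 : A i k = 1 <;> by_cases h2 : A j l = 1 <;> simp [ha, h1, h2]
    simp_rw [split]
    simp_rw [sum_mul_distrib, rowd]
    simp [Finset.sum_const, Finset.card_univ]
    ring
  -- card B1
  have splitB1 : ∀ i j k l : Fin n,
      (if A i k = 1 ∧ A j l = 1 ∧ A i l = 1 then (1:ℕ) else 0) = (a i k * a i l) * a j l := by
    intro i j k l
    by_cases h1 : A i k = 1 <;> by_cases h2 : A j l = 1 <;> by_cases h3 : A i l = 1 <;>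
      simp [ha, h1, h2, h3]
  have hB1 : B1.card = n * d^3 := by
    rw [hB1def, Finset.card_filter]
    simp only [Fintype.sum_prod_type]
    simp_rw [splitB1]
    have inner : ∀ i : Fin n, ∑ j, ∑ k, ∑ l, ((a i k * a i l) * a j l) = d^3 := by
      intro i
      rw [sum_swap3]
      simp_rw [← Finset.mul_sum, cold, ← Finset.sum_mul, ← Finset.mul_sum, rowd]
      simp_rw [← Finset.sum_mul, rowd]
      ring
    simp_rw [inner]
    simp [Finset.card_univ]
  -- card B2
  have splitB2 : ∀ i j k l : Fin n,
      (if A i k = 1 ∧ A j l = 1 ∧ A j k = 1 then (1:ℕ) else 0) = (a j l * a j k) * a i k := by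
    intro i j k l
    by_cases h1 : A i k = 1 <;> by_cases h2 : A j l = 1 <;> by_cases h3 : A j k = 1 <;>
      simp [ha, h1, h2, h3]
  have hB2 : B2.card = n * d^3 := by
    rw [hB2def, Finset.card_filter]
    simp only [Fintype.sum_prod_type]
    simp_rw [splitB2]
    rw [Finset.sum_comm]
    have inner : ∀ j : Fin n, ∑ i, ∑ k, ∑ l, ((a j l * a j k) * a i k) = d^3 := by
      intro j
      rw [sum_swap3]
      simp_rw [← Finset.mul_sum, cold, ← Finset.sum_mul, ← Finset.mul_sum, rowd]
      first
        | ring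
        | (simp_rw [← Finset.sum_mul, rowd]; ring)
        | (simp_rw [← Finset.mul_sum, rowd]; ring)
    simp_rw [inner]
    simp [Finset.card_univ]
  -- card B3
  have splitB3 : ∀ i j k l : Fin n,
      (if A i k = 1 ∧ A j l = 1 ∧ x j = x i then (1:ℕ) else 0)
        = (a i k * a j l) * (if x j = x i then 1 else 0) := by
    intro i j k l
    by_cases h1 : A i k = 1 <;> by_cases h2 : A j l = 1 <;> by_cases h3 : x j = x i <;>
      simp [ha, h1, h2, h3]
  have hB3 : B3.card = ∑ i, (d * d) * #(univ.filter fun j => x j = x i) := by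
    rw [hB3def, Finset.card_filter]
    simp only [Fintype.sum_prod_type]
    simp_rw [splitB3]
    have inner : ∀ i j : Fin n,
        ∑ k, ∑ l, ((a i k * a j l) * (if x j = x i then (1:ℕ) else 0))
          = (d * d) * (if x j = x i then (1:ℕ) else 0) := by
      intro i j
      simp_rw [← Finset.sum_mul, sum_mul_distrib, rowd]
    simp_rw [inner, ← Finset.mul_sum, Finset.card_filter]
  have hB3r : (B3.card : ℝ) ≤ β * ((n:ℝ) * d^2) := by
    rw [hB3]
    push_cast
    have hb : ∀ i : Fin n, ((#(univ.filter fun j => x j = x i)) : ℝ) ≤ β := by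
      intro i
      rw [← hfilt]
      exact hx (x i)
    calc ∑ i : Fin n, (d:ℝ) * d * (#(univ.filter fun j => x j = x i) : ℝ)
        ≤ ∑ _i : Fin n, (d:ℝ) * d * β :=
          Finset.sum_le_sum fun i _ => mul_le_mul_of_nonneg_left (hb i) (by positivity)
      _ = β * ((n:ℝ) * d^2) := by
          simp [Finset.sum_const, Finset.card_univ]
          ring
  -- card B4
  have splitB4 : ∀ i j k l : Fin n,
      (if A i k = 1 ∧ A j l = 1 ∧ z l = z k then (1:ℕ) else 0)
        = (a i k * (if z l = z k then 1 else 0)) * a j l := by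
    intro i j k l
    by_cases h1 : A i k = 1 <;> by_cases h2 : A j l = 1 <;> by_cases h3 : z l = z k <;>
      simp [ha, h1, h2, h3]
  have hB4 : B4.card = ∑ i, ∑ k, a i k * #(univ.filter fun l => z l = z k) * d := by
    rw [hB4def, Finset.card_filter]
    simp only [Fintype.sum_prod_type]
    simp_rw [splitB4]
    have inner : ∀ i : Fin n,
        ∑ j, ∑ k, ∑ l, ((a i k * (if z l = z k then (1:ℕ) else 0)) * a j l)
          = ∑ k, a i k * #(univ.filter fun l => z l = z k) * d := by
      intro i
      rw [sum_swap3]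
      simp_rw [← Finset.mul_sum, cold, ← Finset.sum_mul, ← Finset.mul_sum, Finset.card_filter]
    simp_rw [inner]
  have hB4r : (B4.card : ℝ) ≤ β * ((n:ℝ) * d^2) := by
    rw [hB4]
    push_cast
    have hb : ∀ k : Fin n, ((#(univ.filter fun l => z l = z k)) : ℝ) ≤ β := by
      intro k
      rw [← hfilt]
      exact hz (z k)
    have step : ∀ i : Fin n,
        ∑ k, ((a i k : ℝ) * (#(univ.filter fun l => z l = z k) : ℝ) * (d:ℝ))
          ≤ (d:ℝ) * β * d := by
      intro i
      have : ∀ k : Fin n, (a i k : ℝ) * (#(univ.filter fun l => z l = z k) : ℝ) * (d:ℝ)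
          ≤ (a i k : ℝ) * β * d := by
        intro k
        calc (a i k : ℝ) * (#(univ.filter fun l => z l = z k) : ℝ) * (d:ℝ)
            = ((a i k : ℝ) * d) * (#(univ.filter fun l => z l = z k) : ℝ) := by ring
          _ ≤ ((a i k : ℝ) * d) * β := by
              refine mul_le_mul_of_nonneg_left (hb k) (by positivity)
          _ = (a i k : ℝ) * β * d := by ring
      calc ∑ k, ((a i k : ℝ) * (#(univ.filter fun l => z l = z k) : ℝ) * (d:ℝ))
          ≤ ∑ k, (a i k : ℝ) * β * d := Finset.sum_le_sum fun k _ => this k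
        _ = (∑ k, (a i k : ℝ)) * β * d := by rw [Finset.sum_mul, Finset.sum_mul]
        _ = (d:ℝ) * β * d := by
            have : (∑ k, (a i k : ℝ)) = (d:ℝ) := by exact_mod_cast congrArg (Nat.cast (R := ℝ)) (rowd i)
            rw [this]
    calc (∑ i : Fin n, ∑ k, ((a i k:ℝ) * (#(univ.filter fun l => z l = z k):ℝ) * (d:ℝ)))
        ≤ ∑ _i : Fin n, (d:ℝ) * β * d := Finset.sum_le_sum fun i _ => step i
      _ = β * ((n:ℝ) * d^2) := by
          simp [Finset.sum_const, Finset.card_univ]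
          ring
  -- assemble
  have hPr : (P.card : ℝ) = (n:ℝ)^2 * d^2 := by rw [hP]; push_cast; ring
  have hB1r : (B1.card : ℝ) = (n:ℝ) * d^3 := by rw [hB1]; push_cast; ring
  have hB2r : (B2.card : ℝ) = (n:ℝ) * d^3 := by rw [hB2]; push_cast; ring
  have hchain : (P.card : ℝ) ≤ (G.card:ℝ) + B1.card + B2.card + B3.card + B4.card := by
    exact_mod_cast hcard
  linarith

/-- from a β-delocalized matrix of corank one, at least `n (n - 3β) d² / 2`
distinct full-rank matrices can be obtained by a simple switching. -/
theorem stmt_14 (n d : ℕ) (hd : 1 ≤ d) (hn : 2 * d ≤ n) (β : ℝ)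
    (hβ : β ≤ n / 4) (hβ2 : 2 * d * n ≤ β ^ 2)
    (A : Matrix (Fin n) (Fin n) ℝ) (hA : IsRegAdj n d A)
    (hdel : Delocalized β A) (hrk : A.rank = n - 1) :
    (n : ℝ) * ((n : ℝ) - 3 * β) * d ^ 2 / 2 ≤
      ({B : Matrix (Fin n) (Fin n) ℝ | B.rank = n ∧
          ∃ i j k l : Fin n, CanSwitch A i j k l ∧ B = switch A i j k l}.ncard : ℝ) := by

  classical
  have hn2 : 2 ≤ n := by omega
  -- kernel dimensions
  have kdim : ∀ M : Matrix (Fin n) (Fin n) ℝ, M.rank = n - 1 →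
      Module.finrank ℝ (LinearMap.ker M.mulVecLin) = 1 := by
    intro M hM
    have h1 := LinearMap.finrank_range_add_finrank_ker M.mulVecLin
    have h2 : Module.finrank ℝ (Fin n → ℝ) = n := by simp
    rw [h2] at h1
    rw [Matrix.rank] at hM
    omega
  have hrkT : Aᵀ.rank = n - 1 := by rw [Matrix.rank_transpose]; exact hrk
  -- right kernel vector z
  have hkA := kdim A hrk
  have hker_ne : LinearMap.ker A.mulVecLin ≠ ⊥ := by
    intro h; rw [h, finrank_bot] at hkA; omega
  obtain ⟨z, hzmem, hz0⟩ := Submodule.exists_mem_ne_zero_of_ne_bot hker_ne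
  have hzeq : A.mulVec z = 0 := by
    rw [← Matrix.mulVecLin_apply]; exact LinearMap.mem_ker.mp hzmem
  -- left kernel vector x
  have hkAT := kdim Aᵀ hrkT
  have hkerT_ne : LinearMap.ker Aᵀ.mulVecLin ≠ ⊥ := by
    intro h; rw [h, finrank_bot] at hkAT; omega
  obtain ⟨x, hxmem, hx0⟩ := Submodule.exists_mem_ne_zero_of_ne_bot hkerT_ne
  have hkerAT : LinearMap.ker Aᵀ.mulVecLin = Submodule.span ℝ {x} := by
    symm
    apply Submodule.eq_of_le_of_finrank_eq
    · rwa [Submodule.span_singleton_le_iff_mem]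
    · rw [finrank_span_singleton hx0, hkAT]
  -- delocalization
  have hxlev : ∀ lam : ℝ, ({i : Fin n | x i = lam}.ncard : ℝ) ≤ β :=
    hdel x hx0 (Or.inr hxmem)
  have hzlev : ∀ lam : ℝ, ({i : Fin n | z i = lam}.ncard : ℝ) ≤ β :=
    hdel z hz0 (Or.inl hzmem)
  -- β ≥ 1 and β ≥ 2d
  have hb1 : (1:ℝ) ≤ β := by
    have i0 : Fin n := ⟨0, by omega⟩
    have h := hxlev (x i0)
    have hne : ({i : Fin n | x i = x i0}).Nonempty := ⟨i0, rfl⟩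
    have hpos : 0 < ({i : Fin n | x i = x i0}).ncard :=
      (Set.ncard_pos (Set.toFinite _)).mpr hne
    have : (1:ℝ) ≤ (({i : Fin n | x i = x i0}).ncard : ℝ) := by exact_mod_cast hpos
    linarith
  have hd2 : 2*(d:ℝ) ≤ β := by
    have hna : 2*(d:ℝ) ≤ (n:ℝ) := by exact_mod_cast hn
    have hd0 : (0:ℝ) ≤ 2*d := by positivity
    nlinarith [hβ2, hb1]
  -- the good quadruple set
  set f : Fin n × Fin n × Fin n × Fin n → Matrix (Fin n) (Fin n) ℝ :=
    fun q => switch A q.1 q.2.1 q.2.2.1 q.2.2.2 with hf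
  set G : Finset (Fin n × Fin n × Fin n × Fin n) :=
    Finset.univ.filter (fun q => CanSwitch A q.1 q.2.1 q.2.2.1 q.2.2.2 ∧
      x q.1 ≠ x q.2.1 ∧ z q.2.2.1 ≠ z q.2.2.2) with hGdef
  have hGbound := card_G hA x z hxlev hzlev G (fun q hq => by
    rw [hGdef, Finset.mem_filter]; exact ⟨Finset.mem_univ q, hq⟩)
  have hmemG : ∀ q ∈ G, CanSwitch A q.1 q.2.1 q.2.2.1 q.2.2.2 ∧
      x q.1 ≠ x q.2.1 ∧ z q.2.2.1 ≠ z q.2.2.2 := by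
    intro q hq
    rw [hGdef, Finset.mem_filter] at hq
    exact hq.2
  set T : Set (Matrix (Fin n) (Fin n) ℝ) :=
    {B : Matrix (Fin n) (Fin n) ℝ | B.rank = n ∧
      ∃ i j k l : Fin n, CanSwitch A i j k l ∧ B = switch A i j k l} with hT
  have himg : ∀ q ∈ G, f q ∈ T := by
    intro q hq
    obtain ⟨hcan, hxq, hzq⟩ := hmemG q hq
    exact ⟨switch_rank hcan x z hkerAT hzeq hxq hzq,
      q.1, q.2.1, q.2.2.1, q.2.2.2, hcan, rfl⟩
  have hfib : G.card ≤ 2 * (G.image f).card := by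
    apply Finset.card_le_mul_card_image
    intro b hb
    obtain ⟨q0, hq0G, hq0⟩ := Finset.mem_image.mp hb
    have hsubfib : G.filter (fun q => f q = b) ⊆
        {q0, (q0.2.1, q0.1, q0.2.2.2, q0.2.2.1)} := by
      intro q hq
      rw [Finset.mem_filter] at hq
      obtain ⟨hqG, hqb⟩ := hq
      have h1 := (hmemG q hqG).1
      have h2 := (hmemG q0 hq0G).1
      have heq : switch A q.1 q.2.1 q.2.2.1 q.2.2.2
          = switch A q0.1 q0.2.1 q0.2.2.1 q0.2.2.2 := hqb.trans hq0.symm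
      obtain ⟨qi, qj, qk, ql⟩ := q
      obtain ⟨ri, rj, rk, rl⟩ := q0
      rcases switch_inj h1 h2 heq with ⟨e1, e2, e3, e4⟩ | ⟨e1, e2, e3, e4⟩ <;>
        subst e1 <;> subst e2 <;> subst e3 <;> subst e4 <;> simp
    calc (G.filter (fun q => f q = b)).card
        ≤ ({q0, (q0.2.1, q0.1, q0.2.2.2, q0.2.2.1)} :
            Finset (Fin n × Fin n × Fin n × Fin n)).card := Finset.card_le_card hsubfib
      _ ≤ 2 := le_trans (Finset.card_insert_le _ _) (by simp)
  have hTfin : T.Finite := by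
    apply Set.Finite.subset (Set.finite_range f)
    rintro B ⟨-, i, j, k, l, -, rfl⟩
    exact ⟨(i, j, k, l), rfl⟩
  have hsubT : ((G.image f : Finset (Matrix (Fin n) (Fin n) ℝ)) :
      Set (Matrix (Fin n) (Fin n) ℝ)) ⊆ T := by
    intro B hB
    rw [Finset.mem_coe, Finset.mem_image] at hB
    obtain ⟨q, hqG, rfl⟩ := hB
    exact himg q hqG
  have hcard2 : (G.image f).card ≤ T.ncard := by
    rw [← Set.ncard_coe_finset]
    exact Set.ncard_le_ncard hsubT hTfin
  -- final arithmetic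
  have h2 : (G.card : ℝ) ≤ 2 * ((G.image f).card : ℝ) := by exact_mod_cast hfib
  have h3 : ((G.image f).card : ℝ) ≤ (T.ncard : ℝ) := by exact_mod_cast hcard2
  have hnd : (0:ℝ) ≤ (n:ℝ) * (d:ℝ)^2 := by positivity
  have key : 2*(d:ℝ)*((n:ℝ)*(d:ℝ)^2) ≤ β*((n:ℝ)*(d:ℝ)^2) :=
    mul_le_mul_of_nonneg_right hd2 hnd
  nlinarith [hGbound, h2, h3, key]
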